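/- Let 1 ≤ k < n and let L ≥ 0 satisfy L < SA[k] and L < SA[k+1]. Suppose that for every d with 0 ≤ d < L we have T[SA[k]−d−1] = T[SA[k+1]−d−1]. Then for every d' with 0 ≤ d' ≤ L, the suffixes T[SA[k]−d'..n] and T[SA[k+1]−d'..n] are lexicographically consecutive among the suffixes of T; that is, SA^{-1}[SA[k+1]−d'] = SA^{-1}[SA[k]−d'] + 1. -/
import Mathlib


variable {α : Type*} [LinearOrder α]

/-- The suffix `T[p..n]` of a 1-indexed string `T[1..n]`, as a list. -/
def sfx (T : ℕ → α) (n p : ℕ) : List α :=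
  (List.range (n + 1 - p)).map (fun d => T (p + d))

/-- The Burrows–Wheeler transform determined by the text `T`, its suffix array `SA`,
and the end-of-string character `dollar`:  `BWT[i] = T[SA[i]-1]` if `SA[i] > 1`,
and `BWT[i] = $` if `SA[i] = 1`. -/
def bwt (T : ℕ → α) (SA : ℕ → ℕ) (dollar : α) (i : ℕ) : α :=
  if SA i = 1 then dollar else T (SA i - 1)


lemma sfx_cons (T : ℕ → α) {n p : ℕ} (h : p ≤ n) :
    sfx T n p = T p :: sfx T n (p + 1) := by
  unfold sfx
  have h1 : n + 1 - p = (n - p) + 1 := by omega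
  rw [h1, List.range_succ_eq_map]
  simp only [List.map_cons, List.map_map, add_zero]
  have h2 : n + 1 - (p + 1) = n - p := by omega
  rw [h2]
  congr 1
  apply List.map_congr_left
  intro d _
  simp [Function.comp]
  ring_nf

lemma cons_lt_cases {a b : α} {l l' : List α} (h : (a :: l) < (b :: l')) :
    a < b ∨ (a = b ∧ l < l') := by
  cases h with
  | cons h => exact Or.inr ⟨rfl, h⟩
  | rel h => exact Or.inl h

lemma cons_lt_cons' {a b : α} {l l' : List α} (hab : a = b) (h : l < l') :
    (a :: l) < (b :: l') := by
  subst hab; exact List.Lex.cons h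

/-- If the suffixes `T[SA[k]..n]` and `T[SA[k+1]..n]` are preceded
in `T` by the same string of length `L` (with `L < SA[k]` and `L < SA[k+1]`), then for
every `0 ≤ d' ≤ L` the suffixes `T[SA[k]-d'..n]` and `T[SA[k+1]-d'..n]` are
lexicographically consecutive: `ISA[SA[k+1]-d'] = ISA[SA[k]-d'] + 1`. -/
theorem statement5
    (n : ℕ) (T : ℕ → α) (dollar : α) (SA : ℕ → ℕ)
    -- `T[1..n]` is a string of length `n ≥ 1` ending with `$`,
    -- which is smaller than every other character and occurs only at position `n`
    (hn : 1 ≤ n) (hTn : T n = dollar)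
    (hdollar : ∀ p, 1 ≤ p → p < n → dollar < T p)
    -- `SA` is a permutation of `{1,...,n}` sorting the suffixes lexicographically
    (hSAran : ∀ i, 1 ≤ i → i ≤ n → 1 ≤ SA i ∧ SA i ≤ n)
    (hSAsurj : ∀ p, 1 ≤ p → p ≤ n → ∃ i, 1 ≤ i ∧ i ≤ n ∧ SA i = p)
    (hSAmono : ∀ i j, 1 ≤ i → i < j → j ≤ n → sfx T n (SA i) < sfx T n (SA j))
    -- `ISA` is the inverse permutation of `SA`
    (ISA : ℕ → ℕ)
    (hISA : ∀ i, 1 ≤ i → i ≤ n → ISA (SA i) = i)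
    (hISAran : ∀ p, 1 ≤ p → p ≤ n → 1 ≤ ISA p ∧ ISA p ≤ n ∧ SA (ISA p) = p)
    (k : ℕ) (hk1 : 1 ≤ k) (hk2 : k < n)
    (L : ℕ) (hL1 : L < SA k) (hL2 : L < SA (k + 1))
    (hpre : ∀ d, d < L → T (SA k - d - 1) = T (SA (k + 1) - d - 1)) :
    ∀ d', d' ≤ L → ISA (SA (k + 1) - d') = ISA (SA k - d') + 1 := by
  -- forward and reflection lemmas
  have fwd : ∀ a b, 1 ≤ a → a ≤ n → 1 ≤ b → b ≤ n → ISA a < ISA b →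
      sfx T n a < sfx T n b := by
    intro a b ha1 ha2 hb1 hb2 hab
    have hA := hISAran a ha1 ha2
    have hB := hISAran b hb1 hb2
    have := hSAmono (ISA a) (ISA b) hA.1 hab hB.2.1
    rwa [hA.2.2, hB.2.2] at this
  have key : ∀ a b, 1 ≤ a → a ≤ n → 1 ≤ b → b ≤ n → sfx T n a < sfx T n b →
      ISA a < ISA b := by
    intro a b ha1 ha2 hb1 hb2 hab
    by_contra hcon
    push_neg at hcon
    rcases lt_or_eq_of_le hcon with h | h
    · exact absurd (fwd b a hb1 hb2 ha1 ha2 h) (asymm hab)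
    · have hA := hISAran a ha1 ha2
      have hB := hISAran b hb1 hb2
      have : a = b := by rw [← hA.2.2, ← hB.2.2, h]
      subst this
      exact lt_irrefl _ hab
  have hSAk := hSAran k hk1 hk2.le
  have hSAk1 := hSAran (k + 1) (by omega) (by omega)
  intro d' hd'
  induction d' with
  | zero =>
    simp only [Nat.sub_zero]
    rw [hISA k hk1 hk2.le, hISA (k + 1) (by omega) (by omega)]
  | succ d ih =>
    have ih' := ih (by omega)
    set p := SA k - d - 1 with hp
    set q := SA (k + 1) - d - 1 with hq
    have hp1 : 1 ≤ p := by omega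
    have hq1 : 1 ≤ q := by omega
    have hpn : p + 1 ≤ n := by omega
    have hqn : q + 1 ≤ n := by omega
    have hpeq : SA k - d = p + 1 := by omega
    have hqeq : SA (k + 1) - d = q + 1 := by omega
    rw [hpeq, hqeq] at ih'
    have hc : T p = T q := hpre d (by omega)
    -- goal rewriting
    have hgp : SA k - (d + 1) = p := by omega
    have hgq : SA (k + 1) - (d + 1) = q := by omega
    rw [hgp, hgq]
    -- tails compare
    have htail : sfx T n (p + 1) < sfx T n (q + 1) :=
      fwd (p + 1) (q + 1) (by omega) hpn (by omega) hqn (by omega)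
    have hlt : sfx T n p < sfx T n q := by
      rw [sfx_cons T (by omega : p ≤ n), sfx_cons T (by omega : q ≤ n)]
      exact cons_lt_cons' hc htail
    have hij : ISA p < ISA q := key p q hp1 (by omega) hq1 (by omega) hlt
    by_contra hne
    have hIq := hISAran q hq1 (by omega)
    have hIp := hISAran p hp1 (by omega)
    have hbetween : ISA p + 1 < ISA q := by omega
    set r := SA (ISA p + 1) with hr
    have hi1 : 1 ≤ ISA p + 1 := by omega
    have hi2 : ISA p + 1 ≤ n := by omega
    have hRran := hSAran (ISA p + 1) hi1 hi2
    have hpr : sfx T n p < sfx T n r := by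
      have := hSAmono (ISA p) (ISA p + 1) hIp.1 (by omega) hi2
      rwa [hIp.2.2] at this
    have hrq : sfx T n r < sfx T n q := by
      have := hSAmono (ISA p + 1) (ISA q) hi1 hbetween hIq.2.1
      rwa [hIq.2.2] at this
    rw [sfx_cons T (by omega : p ≤ n), sfx_cons T hRran.2] at hpr
    rw [sfx_cons T hRran.2, sfx_cons T (by omega : q ≤ n)] at hrq
    rcases cons_lt_cases hpr with h1 | ⟨h1, h1'⟩
    · rcases cons_lt_cases hrq with h2 | ⟨h2, _⟩
      · rw [hc] at h1; exact absurd (h1.trans h2) (lt_irrefl _)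
      · rw [hc, h2] at h1; exact absurd h1 (lt_irrefl _)
    · rcases cons_lt_cases hrq with h2 | ⟨h2, h2'⟩
      · rw [← h1, hc] at h2; exact absurd h2 (lt_irrefl _)
      · -- T p = T r, tails chain
        have hrn : r < n := by
          rcases lt_or_eq_of_le hRran.2 with h | h
          · exact h
          · exfalso
            have : dollar < T p := hdollar p hp1 (by omega)
            rw [h1, h, hTn] at this
            exact lt_irrefl _ this
        have hA := key (p + 1) (r + 1) (by omega) hpn (by omega) (by omega) h1'
        have hB := key (r + 1) (q + 1) (by omega) (by omega) (by omega) hqn h2'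
        omega
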